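/- Let P be row-stochastic, d_μ > 0 a probability vector, λ ∈ [0,1), β ∈ (0,1), m^T = d_μ^T(I - P^{λ,β})^{-1} with P^{λ,β} = I - (I-λβP)^{-1}(I-βP), and ζ = β(1-λ)/(1-λβ). Then for every vector v: ‖v‖_m² - (1/ζ)‖P^{λ,β}v‖_m² ≥ ‖v‖_{d_μ}², where ‖v‖_w² = Σ_s w(s)v(s)². -/

import Mathlib

open Matrix Finset

attribute [local instance] Matrix.linftyOpNormedRing Matrix.linftyOpNormedAlgebra

section Aux

variable {S : Type*} [Fintype S] [DecidableEq S]

private lemma pow_entry_nonneg (M : Matrix S S ℝ) (h0 : ∀ i j, 0 ≤ M i j) :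
    ∀ (n : ℕ) (i j : S), 0 ≤ (M ^ n) i j := by
  intro n
  induction n with
  | zero => intro i j; rw [pow_zero]; by_cases h : i = j <;> simp [Matrix.one_apply, h]
  | succ n ih =>
      intro i j
      rw [pow_succ, Matrix.mul_apply]
      exact Finset.sum_nonneg fun k _ => mul_nonneg (ih _ _) (h0 _ _)

private lemma norm_le_of_rowsum (M : Matrix S S ℝ) (h0 : ∀ i j, 0 ≤ M i j)
    (c : ℝ) (hc : 0 ≤ c) (h : ∀ i, ∑ j, M i j ≤ c) : ‖M‖ ≤ c := by
  rw [Matrix.linfty_opNorm_def]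
  have : (Finset.univ.sup fun i : S => ∑ j : S, ‖M i j‖₊) ≤ ⟨c, hc⟩ := by
    refine Finset.sup_le fun i _ => ?_
    apply NNReal.coe_le_coe.mp
    push_cast
    calc ∑ j, ‖M i j‖ = ∑ j, M i j := by
          exact Finset.sum_congr rfl fun j _ => Real.norm_of_nonneg (h0 i j)
      _ ≤ c := h i
  exact_mod_cast this

private lemma inv_one_sub_nonneg (M : Matrix S S ℝ) (h : ‖M‖ < 1)
    (h0 : ∀ i j, 0 ≤ M i j) : ∀ i j, 0 ≤ (1 - M)⁻¹ i j := by
  haveI : CompleteSpace (Matrix S S ℝ) :=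
    FiniteDimensional.complete ℝ (Matrix S S ℝ)
  intro i j
  have hs : HasSum (fun n : ℕ => M ^ n) (Ring.inverse (1 - M)) :=
    hasSum_geom_series_inverse M h
  rw [Matrix.nonsing_inv_eq_ringInverse]
  let f : Matrix S S ℝ →ₗ[ℝ] ℝ :=
    { toFun := fun N => N i j
      map_add' := fun _ _ => rfl
      map_smul' := fun _ _ => rfl }
  have hf : Continuous f := f.continuous_of_finiteDimensional
  have hs' : HasSum (fun n : ℕ => f (M ^ n)) (f (Ring.inverse (1 - M))) :=
    (⟨f, hf⟩ : Matrix S S ℝ →L[ℝ] ℝ).hasSum hs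
  have key : (0 : ℝ) ≤ f (Ring.inverse (1 - M)) :=
    hasSum_le (fun n => pow_entry_nonneg M h0 n i j) hasSum_zero hs'
  exact key

end Aux

theorem stmt_15 {S : Type*} [Fintype S] [DecidableEq S]
    (P : Matrix S S ℝ) (hP0 : ∀ s s', 0 ≤ P s s') (hP1 : ∀ s, ∑ s', P s s' = 1)
    (dμ : S → ℝ) (hd0 : ∀ s, 0 < dμ s) (hd1 : ∑ s, dμ s = 1)
    (lam : ℝ) (hlam : lam ∈ Set.Ico (0 : ℝ) 1)
    (β : ℝ) (hβ : β ∈ Set.Ioo (0 : ℝ) 1)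
    (Plb : Matrix S S ℝ) (hPlb : Plb = 1 - (1 - (lam * β) • P)⁻¹ * (1 - β • P))
    (m : S → ℝ) (hm : m = Matrix.vecMul dμ (1 - Plb)⁻¹)
    (ζ : ℝ) (hζ : ζ = β * (1 - lam) / (1 - lam * β))
    (v : S → ℝ) :
    ∑ s, dμ s * v s ^ 2 ≤
      ∑ s, m s * v s ^ 2 - (1 / ζ) * ∑ s, m s * (Plb.mulVec v s) ^ 2 := by
  haveI : CompleteSpace (Matrix S S ℝ) :=
    FiniteDimensional.complete ℝ (Matrix S S ℝ)
  obtain ⟨hlam0, hlam1⟩ := hlam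
  obtain ⟨hβ0, hβ1⟩ := hβ
  have hlb1 : lam * β < 1 := by nlinarith
  have hlb0 : 0 ≤ lam * β := by positivity
  set A : Matrix S S ℝ := 1 - (lam * β) • P with hA
  -- norm bound for (lam*β) • P
  have hMP0 : ∀ i j, 0 ≤ ((lam * β) • P) i j := fun i j =>
    mul_nonneg hlb0 (hP0 i j)
  have hMPnorm : ‖(lam * β) • P‖ < 1 := by
    refine lt_of_le_of_lt (norm_le_of_rowsum _ hMP0 (lam * β) hlb0 fun i => ?_) hlb1
    simp only [Matrix.smul_apply, smul_eq_mul, ← Finset.mul_sum, hP1 i, mul_one, le_refl]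
  have hAdet : IsUnit A.det :=
    (Matrix.isUnit_iff_isUnit_det A).mp (isUnit_one_sub_of_norm_lt_one hMPnorm)
  have hAinv0 : ∀ i j, 0 ≤ A⁻¹ i j := inv_one_sub_nonneg _ hMPnorm hMP0
  have hAA : A⁻¹ * A = 1 := Matrix.nonsing_inv_mul A hAdet
  have hAA' : A * A⁻¹ = 1 := Matrix.mul_nonsing_inv A hAdet
  -- Plb = (β - lam*β) • (A⁻¹ * P)
  have hPlb2 : Plb = (β - lam * β) • (A⁻¹ * P) := by
    rw [hPlb]
    calc (1 : Matrix S S ℝ) - (1 - (lam * β) • P)⁻¹ * (1 - β • P)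
        = A⁻¹ * A - A⁻¹ * (1 - β • P) := by rw [hAA]
      _ = A⁻¹ * (A - (1 - β • P)) := (Matrix.mul_sub _ _ _).symm
      _ = A⁻¹ * ((β - lam * β) • P) := by
          congr 1
          rw [hA, sub_smul]
          abel
      _ = (β - lam * β) • (A⁻¹ * P) := by rw [Matrix.mul_smul]
  have hc0 : 0 ≤ β - lam * β := by nlinarith
  have hPlb0 : ∀ i j, 0 ≤ Plb i j := by
    intro i j
    rw [hPlb2]
    simp only [Matrix.smul_apply, smul_eq_mul, Matrix.mul_apply]
    exact mul_nonneg hc0 (Finset.sum_nonneg fun k _ => mul_nonneg (hAinv0 i k) (hP0 k j))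
  -- row sums
  have hne : (1 : ℝ) - lam * β ≠ 0 := by nlinarith
  have u1 : (fun _ : S => (1 : ℝ)) = fun _ => (1 : ℝ) := rfl
  have hPu : P *ᵥ (fun _ => (1 : ℝ)) = fun _ => (1 : ℝ) := by
    funext i
    simp [Matrix.mulVec, dotProduct, hP1 i]
  have hAu : A *ᵥ (fun _ => (1 : ℝ)) = (1 - lam * β) • (fun _ => (1 : ℝ)) := by
    rw [hA, Matrix.sub_mulVec, Matrix.one_mulVec, Matrix.smul_mulVec, hPu]
    funext i
    simp [sub_smul]
  have hAinvu : A⁻¹ *ᵥ (fun _ => (1 : ℝ)) = (1 - lam * β)⁻¹ • (fun _ => (1 : ℝ)) := by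
    have h1 : A⁻¹ *ᵥ (A *ᵥ (fun _ => (1 : ℝ))) = fun _ => (1 : ℝ) := by
      rw [Matrix.mulVec_mulVec, hAA, Matrix.one_mulVec]
    rw [hAu, Matrix.mulVec_smul] at h1
    funext i
    have h2 := congrFun h1 i
    simp only [Pi.smul_apply, smul_eq_mul, mul_one] at h2 ⊢
    exact eq_inv_of_mul_eq_one_right h2
  have hrow : ∀ i, ∑ j, Plb i j = ζ := by
    intro i
    have h1 : Plb *ᵥ (fun _ => (1 : ℝ)) = ((β - lam * β) * (1 - lam * β)⁻¹) • (fun _ : S => (1 : ℝ)) := by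
      rw [hPlb2, Matrix.smul_mulVec, ← Matrix.mulVec_mulVec, hPu, hAinvu, smul_smul]
    have h2 := congrFun h1 i
    simp only [Matrix.mulVec, dotProduct, mul_one, Pi.smul_apply, smul_eq_mul] at h2
    rw [h2, hζ]
    field_simp
  have hζ0 : 0 < ζ := by
    rw [hζ]
    have : 0 < 1 - lam * β := by nlinarith
    have : 0 < β * (1 - lam) := by nlinarith
    positivity
  have hζ1 : ζ < 1 := by
    rw [hζ, div_lt_one (by nlinarith)]
    nlinarith
  -- B = 1 - Plb invertible, inverse nonneg
  have hPlbnorm : ‖Plb‖ < 1 :=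
    lt_of_le_of_lt (norm_le_of_rowsum Plb hPlb0 ζ hζ0.le fun i => (hrow i).le) hζ1
  have hBdet : IsUnit (1 - Plb).det :=
    (Matrix.isUnit_iff_isUnit_det _).mp (isUnit_one_sub_of_norm_lt_one hPlbnorm)
  have hBinv0 : ∀ i j, 0 ≤ (1 - Plb)⁻¹ i j := inv_one_sub_nonneg _ hPlbnorm hPlb0
  have hBB : (1 - Plb)⁻¹ * (1 - Plb) = 1 := Matrix.nonsing_inv_mul _ hBdet
  -- m is nonneg and m ᵥ* (1 - Plb) = dμ
  have hm0 : ∀ j, 0 ≤ m j := by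
    intro j
    rw [hm]
    simp only [Matrix.vecMul, dotProduct]
    exact Finset.sum_nonneg fun i _ => mul_nonneg (hd0 i).le (hBinv0 i j)
  have hmB : m ᵥ* (1 - Plb) = dμ := by
    rw [hm, Matrix.vecMul_vecMul, hBB, Matrix.vecMul_one]
  have hkey : ∀ j, ∑ i, m i * Plb i j = m j - dμ j := by
    intro j
    have h1 : m ᵥ* (1 : Matrix S S ℝ) - m ᵥ* Plb = dμ := by
      rw [← Matrix.vecMul_sub]; exact hmB
    have h2 := congrFun h1 j
    simp only [Matrix.vecMul_one, Pi.sub_apply, Matrix.vecMul, dotProduct] at h2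
    linarith [h2]
  -- Cauchy-Schwarz per row
  have hCS : ∀ s, (Plb.mulVec v s) ^ 2 ≤ ζ * ∑ s', Plb s s' * v s' ^ 2 := by
    intro s
    have h1 : Plb.mulVec v s = ∑ s', Real.sqrt (Plb s s') * (Real.sqrt (Plb s s') * v s') := by
      simp only [Matrix.mulVec, dotProduct]
      refine Finset.sum_congr rfl fun s' _ => ?_
      rw [← mul_assoc, Real.mul_self_sqrt (hPlb0 s s')]
    have h2 := Finset.sum_mul_sq_le_sq_mul_sq Finset.univ
      (fun s' => Real.sqrt (Plb s s')) (fun s' => Real.sqrt (Plb s s') * v s')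
    rw [h1]
    calc (∑ s', Real.sqrt (Plb s s') * (Real.sqrt (Plb s s') * v s')) ^ 2
        ≤ (∑ s', Real.sqrt (Plb s s') ^ 2) * ∑ s', (Real.sqrt (Plb s s') * v s') ^ 2 := h2
      _ = ζ * ∑ s', Plb s s' * v s' ^ 2 := by
          congr 1
          · rw [← hrow s]
            exact Finset.sum_congr rfl fun s' _ => Real.sq_sqrt (hPlb0 s s')
          · refine Finset.sum_congr rfl fun s' _ => ?_
            rw [mul_pow, Real.sq_sqrt (hPlb0 s s')]
  -- put it together
  have key2 : ∑ s, m s * (Plb.mulVec v s) ^ 2 ≤ ζ * ∑ s', (m s' - dμ s') * v s' ^ 2 := by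
    calc ∑ s, m s * (Plb.mulVec v s) ^ 2
        ≤ ∑ s, m s * (ζ * ∑ s', Plb s s' * v s' ^ 2) :=
          Finset.sum_le_sum fun s _ => mul_le_mul_of_nonneg_left (hCS s) (hm0 s)
      _ = ∑ s, ∑ s', ζ * (m s * Plb s s' * v s' ^ 2) := by
          refine Finset.sum_congr rfl fun s _ => ?_
          simp only [Finset.mul_sum]
          exact Finset.sum_congr rfl fun s' _ => by ring
      _ = ∑ s', ∑ s, ζ * (m s * Plb s s' * v s' ^ 2) := Finset.sum_comm
      _ = ζ * ∑ s', (∑ s, m s * Plb s s') * v s' ^ 2 := by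
          simp only [Finset.mul_sum, Finset.sum_mul]
      _ = ζ * ∑ s', (m s' - dμ s') * v s' ^ 2 := by
          congr 1
          exact Finset.sum_congr rfl fun s' _ => by rw [hkey s']
  have hsub : ∑ s', (m s' - dμ s') * v s' ^ 2 = ∑ s, m s * v s ^ 2 - ∑ s, dμ s * v s ^ 2 := by
    rw [← Finset.sum_sub_distrib]
    exact Finset.sum_congr rfl fun s _ => by ring
  have hfin : (1 / ζ) * ∑ s, m s * (Plb.mulVec v s) ^ 2 ≤
      ∑ s, m s * v s ^ 2 - ∑ s, dμ s * v s ^ 2 := by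
    rw [one_div, inv_mul_le_iff₀ hζ0]
    rw [← hsub]
    exact key2
  linarith
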